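/- Let C, K, B, N, H be matrix-valued functions and σ ∈ ℂ with K(σ), K(2σ), K(3σ) invertible. Define V₁ := K(σ)⁻¹B(σ), V₂ := K(2σ)⁻¹(H(σ,σ)(V₁⊗V₁) + N(σ)(I_m⊗V₁)), and W₂ := (K(3σ)⁻¹)ᴴ(C(3σ))ᴴ. Suppose V contains the columns of V₁ and V₂ in its column span, W contains the columns of W₂ in its column span, and Wᴴ K(sσ) V is invertible for s ∈ {1,2,3}. Then the reduced third symmetric subsystem transfer function interpolates the full one at (σ,σ,σ): F̂₃(σ,σ,σ) = F₃(σ,σ,σ), where F₃(σ,σ,σ) = (1/2) C(3σ) K(3σ)⁻¹ (H(2σ,σ)(V₂⊗V₁) + H(σ,2σ)(V₁⊗V₂) + N(2σ)(I_m⊗V₂)) and F̂₃ is the analogous expression with projected quantities Ĉ(s)=C(s)V, K̂(s)=WᴴK(s)V, B̂(s)=WᴴB(s), N̂(s)=WᴴN(s)(I_m⊗V), Ĥ(s₁,s₂)=WᴴH(s₁,s₂)(V⊗V), and with V̂₁ := K̂(σ)⁻¹B̂(σ), V̂₂ := K̂(2σ)⁻¹(Ĥ(σ,σ)(V̂₁⊗V̂₁)+N̂(σ)(I_m⊗V̂₁)).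 -/

import Mathlib

open Matrix Kronecker


private lemma mul_submatrix_id' {a b c d : Type*} [Fintype b]
    (A : Matrix a b ℂ) (B : Matrix b c ℂ) (e : d → c) :
    (A * B).submatrix id e = A * B.submatrix id e := by
  ext i j
  simp [Matrix.mul_apply]

theorem stmt_9 {n m p r : ℕ}
    (C : ℂ → Matrix (Fin p) (Fin n) ℂ)
    (K : ℂ → Matrix (Fin n) (Fin n) ℂ)
    (B : ℂ → Matrix (Fin n) (Fin m) ℂ)
    (N : ℂ → Matrix (Fin n) (Fin m × Fin n) ℂ)
    (H : ℂ → ℂ → Matrix (Fin n) (Fin n × Fin n) ℂ)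
    (σ : ℂ) (hK1 : IsUnit (K σ)) (hK2 : IsUnit (K (2 * σ)))
    (hK3 : IsUnit (K (3 * σ)))
    (V W : Matrix (Fin n) (Fin r) ℂ)
    (V₁ : Matrix (Fin n) (Fin m) ℂ) (hV₁ : V₁ = (K σ)⁻¹ * B σ)
    (V₂ : Matrix (Fin n) (Fin m × Fin m) ℂ)
    (hV₂ : V₂ = (K (2 * σ))⁻¹ *
      (H σ σ * (V₁ ⊗ₖ V₁) + N σ * ((1 : Matrix (Fin m) (Fin m) ℂ) ⊗ₖ V₁)))
    (W₂ : Matrix (Fin n) (Fin p) ℂ)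
    (hW₂ : W₂ = ((K (3 * σ))⁻¹)ᴴ * (C (3 * σ))ᴴ)
    (hVspan₁ : ∃ X, V * X = V₁) (hVspan₂ : ∃ X, V * X = V₂)
    (hWspan : ∃ X, W * X = W₂)
    (hKhat1 : IsUnit (Wᴴ * K σ * V)) (hKhat2 : IsUnit (Wᴴ * K (2 * σ) * V))
    (hKhat3 : IsUnit (Wᴴ * K (3 * σ) * V)) :
    let assoc := Equiv.prodAssoc (Fin m) (Fin m) (Fin m)
    let Khat : ℂ → Matrix (Fin r) (Fin r) ℂ := fun s => Wᴴ * K s * V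
    let Bhat : ℂ → Matrix (Fin r) (Fin m) ℂ := fun s => Wᴴ * B s
    let Nhat : ℂ → Matrix (Fin r) (Fin m × Fin r) ℂ :=
      fun s => Wᴴ * N s * ((1 : Matrix (Fin m) (Fin m) ℂ) ⊗ₖ V)
    let Hhat : ℂ → ℂ → Matrix (Fin r) (Fin r × Fin r) ℂ :=
      fun s₁ s₂ => Wᴴ * H s₁ s₂ * (V ⊗ₖ V)
    let V₁hat : Matrix (Fin r) (Fin m) ℂ := (Khat σ)⁻¹ * Bhat σ
    let V₂hat : Matrix (Fin r) (Fin m × Fin m) ℂ := (Khat (2 * σ))⁻¹ *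
      (Hhat σ σ * (V₁hat ⊗ₖ V₁hat) +
        Nhat σ * ((1 : Matrix (Fin m) (Fin m) ℂ) ⊗ₖ V₁hat))
    ((1 : ℂ) / 2) • ((C (3 * σ) * V) * (Khat (3 * σ))⁻¹ *
        ((Hhat (2 * σ) σ * (V₂hat ⊗ₖ V₁hat)).submatrix id assoc.symm +
          Hhat σ (2 * σ) * (V₁hat ⊗ₖ V₂hat) +
          Nhat (2 * σ) * ((1 : Matrix (Fin m) (Fin m) ℂ) ⊗ₖ V₂hat)))
      = ((1 : ℂ) / 2) • (C (3 * σ) * (K (3 * σ))⁻¹ *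
        ((H (2 * σ) σ * (V₂ ⊗ₖ V₁)).submatrix id assoc.symm +
          H σ (2 * σ) * (V₁ ⊗ₖ V₂) +
          N (2 * σ) * ((1 : Matrix (Fin m) (Fin m) ℂ) ⊗ₖ V₂))) := by

  intro assoc Khat Bhat Nhat Hhat V₁hat V₂hat
  obtain ⟨X₁, hX₁⟩ : ∃ X : Matrix (Fin r) (Fin m) ℂ, V * X = V₁ := hVspan₁
  obtain ⟨X₂, hX₂⟩ : ∃ X : Matrix (Fin r) (Fin m × Fin m) ℂ, V * X = V₂ := hVspan₂
  obtain ⟨Y, hY⟩ : ∃ X : Matrix (Fin r) (Fin p) ℂ, W * X = W₂ := hWspan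
  have hdK1 := (Matrix.isUnit_iff_isUnit_det _).mp hK1
  have hdK2 := (Matrix.isUnit_iff_isUnit_det _).mp hK2
  have hdK3 := (Matrix.isUnit_iff_isUnit_det _).mp hK3
  have hdKh1 := (Matrix.isUnit_iff_isUnit_det _).mp hKhat1
  have hdKh2 := (Matrix.isUnit_iff_isUnit_det _).mp hKhat2
  have hdKh3 := (Matrix.isUnit_iff_isUnit_det _).mp hKhat3
  -- Step 1 : V * V₁hat = V₁
  have hKV₁ : K σ * V₁ = B σ := by
    rw [hV₁, ← Matrix.mul_assoc, Matrix.mul_nonsing_inv _ hdK1, Matrix.one_mul]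
  have hKX₁ : Khat σ * X₁ = Bhat σ := by
    show Wᴴ * K σ * V * X₁ = Wᴴ * B σ
    rw [Matrix.mul_assoc, hX₁, Matrix.mul_assoc, hKV₁]
  have hV₁hat : V₁hat = X₁ := by
    show (Khat σ)⁻¹ * Bhat σ = X₁
    rw [← hKX₁, ← Matrix.mul_assoc, Matrix.nonsing_inv_mul _ hdKh1, Matrix.one_mul]
  have hVV₁ : V * V₁hat = V₁ := by rw [hV₁hat, hX₁]
  -- Step 2 : V * V₂hat = V₂
  have hKV₂ : K (2 * σ) * V₂ =
      H σ σ * (V₁ ⊗ₖ V₁) + N σ * ((1 : Matrix (Fin m) (Fin m) ℂ) ⊗ₖ V₁) := by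
    rw [hV₂, ← Matrix.mul_assoc, Matrix.mul_nonsing_inv _ hdK2, Matrix.one_mul]
  have hHh : Hhat σ σ * (V₁hat ⊗ₖ V₁hat) = Wᴴ * (H σ σ * (V₁ ⊗ₖ V₁)) := by
    show Wᴴ * H σ σ * (V ⊗ₖ V) * (V₁hat ⊗ₖ V₁hat) = _
    rw [Matrix.mul_assoc, ← Matrix.mul_kronecker_mul, hVV₁, Matrix.mul_assoc]
  have hNh : Nhat σ * ((1 : Matrix (Fin m) (Fin m) ℂ) ⊗ₖ V₁hat)
      = Wᴴ * (N σ * ((1 : Matrix (Fin m) (Fin m) ℂ) ⊗ₖ V₁)) := by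
    show Wᴴ * N σ * ((1 : Matrix (Fin m) (Fin m) ℂ) ⊗ₖ V) * _ = _
    rw [Matrix.mul_assoc, ← Matrix.mul_kronecker_mul, hVV₁, Matrix.one_mul,
      Matrix.mul_assoc]
  have hKX₂ : Khat (2 * σ) * X₂ =
      Hhat σ σ * (V₁hat ⊗ₖ V₁hat) +
        Nhat σ * ((1 : Matrix (Fin m) (Fin m) ℂ) ⊗ₖ V₁hat) := by
    show Wᴴ * K (2 * σ) * V * X₂ = _
    rw [Matrix.mul_assoc, hX₂, Matrix.mul_assoc, hKV₂, hHh, hNh, Matrix.mul_add]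
  have hV₂hat : V₂hat = X₂ := by
    show (Khat (2 * σ))⁻¹ * _ = X₂
    rw [← hKX₂, ← Matrix.mul_assoc, Matrix.nonsing_inv_mul _ hdKh2, Matrix.one_mul]
  have hVV₂ : V * V₂hat = V₂ := by rw [hV₂hat, hX₂]
  -- Step 3 : C(3σ) * V * (Khat 3σ)⁻¹ * Wᴴ = C(3σ) * (K 3σ)⁻¹
  have hW₂T : W₂ᴴ = C (3 * σ) * (K (3 * σ))⁻¹ := by
    rw [hW₂, Matrix.conjTranspose_mul, Matrix.conjTranspose_conjTranspose,
      Matrix.conjTranspose_conjTranspose]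
  have hYW : Yᴴ * Wᴴ = C (3 * σ) * (K (3 * σ))⁻¹ := by
    rw [← Matrix.conjTranspose_mul, hY, hW₂T]
  have hYK : Yᴴ * Khat (3 * σ) = C (3 * σ) * V := by
    show Yᴴ * (Wᴴ * K (3 * σ) * V) = _
    rw [← Matrix.mul_assoc, ← Matrix.mul_assoc, hYW,
      Matrix.mul_assoc (C (3 * σ)), Matrix.nonsing_inv_mul _ hdK3,
      Matrix.mul_one]
  have hCV : C (3 * σ) * V * (Khat (3 * σ))⁻¹ = Yᴴ := by
    rw [← hYK, Matrix.mul_assoc, Matrix.mul_nonsing_inv _ hdKh3, Matrix.mul_one]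
  -- Step 4 : rewrite the three reduced terms
  have h1 : Hhat (2 * σ) σ * (V₂hat ⊗ₖ V₁hat)
      = Wᴴ * (H (2 * σ) σ * (V₂ ⊗ₖ V₁)) := by
    show Wᴴ * H (2 * σ) σ * (V ⊗ₖ V) * (V₂hat ⊗ₖ V₁hat) = _
    rw [Matrix.mul_assoc, ← Matrix.mul_kronecker_mul, hVV₂, hVV₁, Matrix.mul_assoc]
  have h2 : Hhat σ (2 * σ) * (V₁hat ⊗ₖ V₂hat)
      = Wᴴ * (H σ (2 * σ) * (V₁ ⊗ₖ V₂)) := by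
    show Wᴴ * H σ (2 * σ) * (V ⊗ₖ V) * (V₁hat ⊗ₖ V₂hat) = _
    rw [Matrix.mul_assoc, ← Matrix.mul_kronecker_mul, hVV₂, hVV₁, Matrix.mul_assoc]
  have h3 : Nhat (2 * σ) * ((1 : Matrix (Fin m) (Fin m) ℂ) ⊗ₖ V₂hat)
      = Wᴴ * (N (2 * σ) * ((1 : Matrix (Fin m) (Fin m) ℂ) ⊗ₖ V₂)) := by
    show Wᴴ * N (2 * σ) * ((1 : Matrix (Fin m) (Fin m) ℂ) ⊗ₖ V) * _ = _
    rw [Matrix.mul_assoc, ← Matrix.mul_kronecker_mul, hVV₂, Matrix.one_mul,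
      Matrix.mul_assoc]
  rw [h1, h2, h3, mul_submatrix_id', ← Matrix.mul_add, ← Matrix.mul_add,
    ← Matrix.mul_assoc, hCV, hYW]
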